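/- arXiv:1512.01382 — 2 statements merged into one kernel-verified Lean document; each statement's English description precedes it below -/
import Mathlib

section
/- If b̃ minimizes b ↦ max_{1≤i≤n}(Y_i − (x_i − x̄)ᵀ b) over ℝ^p, and one sets β̃_0 = max_i (Y_i − x_iᵀ b̃), then the pair (β̃_0, b̃) is feasible (Y_i ≤ β̃_0 + x_iᵀ b̃ for all i) and attains the optimum of the linear program: β̃_0 + x̄ᵀ b̃ = inf{b_0 + x̄ᵀ b : Y_i ≤ b_0 + x_iᵀ b for all i}. -/
theorem r_estimator_solves_lp {n p : ℕ} (hn : 0 < n)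
    (Y : Fin n → ℝ) (x : Fin n → Fin p → ℝ) (btilde : Fin p → ℝ)
    (hmin : ∀ b : Fin p → ℝ,
      Finset.univ.sup' (Finset.univ_nonempty_iff.mpr ⟨⟨0, hn⟩⟩)
          (fun i => Y i - ∑ j, (x i j - (1 / n : ℝ) * ∑ k, x k j) * btilde j) ≤
        Finset.univ.sup' (Finset.univ_nonempty_iff.mpr ⟨⟨0, hn⟩⟩)
          (fun i => Y i - ∑ j, (x i j - (1 / n : ℝ) * ∑ k, x k j) * b j)) :
    (∀ i, Y i ≤
        (Finset.univ.sup' (Finset.univ_nonempty_iff.mpr ⟨⟨0, hn⟩⟩)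
          (fun i' => Y i' - ∑ j, x i' j * btilde j)) + ∑ j, x i j * btilde j) ∧
    (Finset.univ.sup' (Finset.univ_nonempty_iff.mpr ⟨⟨0, hn⟩⟩)
          (fun i => Y i - ∑ j, x i j * btilde j))
        + ∑ j, ((1 / n : ℝ) * ∑ k, x k j) * btilde j =
      sInf {v : ℝ | ∃ (b0 : ℝ) (b : Fin p → ℝ),
        (∀ i, Y i ≤ b0 + ∑ j, x i j * b j) ∧
        v = b0 + ∑ j, ((1 / n : ℝ) * ∑ k, x k j) * b j} := by
  have ne : (Finset.univ : Finset (Fin n)).Nonempty :=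
    Finset.univ_nonempty_iff.mpr ⟨⟨0, hn⟩⟩
  set xbar : Fin p → ℝ := fun j => (1 / n : ℝ) * ∑ k, x k j with hxbar
  have key : ∀ (b : Fin p → ℝ) (i : Fin n),
      Y i - ∑ j, (x i j - xbar j) * b j
        = (Y i - ∑ j, x i j * b j) + ∑ j, xbar j * b j := by
    intro b i
    rw [show (fun j => (x i j - xbar j) * b j)
        = fun j => x i j * b j - xbar j * b j from funext fun j => sub_mul _ _ _,
      Finset.sum_sub_distrib]
    ring
  have hsup : ∀ b : Fin p → ℝ,
      Finset.univ.sup' ne (fun i => Y i - ∑ j, (x i j - xbar j) * b j)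
        = Finset.univ.sup' ne (fun i => Y i - ∑ j, x i j * b j)
            + ∑ j, xbar j * b j := by
    intro b
    rw [Finset.sup'_add _ (fun i => Y i - ∑ j, x i j * b j) (∑ j, xbar j * b j) ne]
    exact Finset.sup'_congr ne rfl (fun i _ => key b i)
  have feas : ∀ i, Y i ≤
      (Finset.univ.sup' ne (fun i' => Y i' - ∑ j, x i' j * btilde j))
        + ∑ j, x i j * btilde j := by
    intro i
    have := Finset.le_sup' (fun i' => Y i' - ∑ j, x i' j * btilde j)
      (Finset.mem_univ i)
    linarith
  refine ⟨feas, ?_⟩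
  have hmem : (Finset.univ.sup' ne (fun i => Y i - ∑ j, x i j * btilde j))
      + ∑ j, xbar j * btilde j ∈
      {v : ℝ | ∃ (b0 : ℝ) (b : Fin p → ℝ),
        (∀ i, Y i ≤ b0 + ∑ j, x i j * b j) ∧
        v = b0 + ∑ j, xbar j * b j} :=
    ⟨_, btilde, feas, rfl⟩
  have hlb : ∀ v ∈ {v : ℝ | ∃ (b0 : ℝ) (b : Fin p → ℝ),
        (∀ i, Y i ≤ b0 + ∑ j, x i j * b j) ∧
        v = b0 + ∑ j, xbar j * b j},
      (Finset.univ.sup' ne (fun i => Y i - ∑ j, x i j * btilde j))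
        + ∑ j, xbar j * btilde j ≤ v := by
    rintro v ⟨b0, b, hfeas, rfl⟩
    have h1 : Finset.univ.sup' ne (fun i => Y i - ∑ j, x i j * b j) ≤ b0 :=
      Finset.sup'_le ne _ fun i _ => by have := hfeas i; linarith
    have h2 := hmin b
    rw [hsup btilde, hsup b] at h2
    linarith
  exact le_antisymm (le_csInf ⟨_, hmem⟩ hlb) (csInf_le ⟨_, hlb⟩ hmem)
end

section
/- The function b ↦ max_{1≤i≤n}(Y_i − (x_i − x̄)ᵀ b) attains its infimum on ℝ^p; that is, there exists b̃ ∈ ℝ^p with max_i(Y_i − (x_i − x̄)ᵀ b̃) = inf_{b ∈ ℝ^p} max_i(Y_i − (x_i − x̄)ᵀ b). -/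
set_option maxHeartbeats 1000000

theorem max_centered_residual_attains_inf {n p : ℕ} (hn : 0 < n)
    (Y : Fin n → ℝ) (x : Fin n → Fin p → ℝ) :
    ∃ btilde : Fin p → ℝ,
      Finset.univ.sup' (Finset.univ_nonempty_iff.mpr ⟨⟨0, hn⟩⟩)
          (fun i => Y i - ∑ j, (x i j - (1 / n : ℝ) * ∑ k, x k j) * btilde j) =
        ⨅ b : Fin p → ℝ,
          Finset.univ.sup' (Finset.univ_nonempty_iff.mpr ⟨⟨0, hn⟩⟩)
            (fun i => Y i - ∑ j, (x i j - (1 / n : ℝ) * ∑ k, x k j) * b j) := by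
  classical
  have hne : (Finset.univ : Finset (Fin n)).Nonempty :=
    Finset.univ_nonempty_iff.mpr ⟨⟨0, hn⟩⟩
  set c : Fin n → Fin p → ℝ := fun i j => x i j - (1 / n : ℝ) * ∑ k, x k j with hc
  -- centered columns sum to zero
  have hcsum : ∀ j, ∑ i, c i j = 0 := by
    intro j
    have hn' : (n : ℝ) ≠ 0 := Nat.cast_ne_zero.mpr hn.ne'
    simp only [hc, Finset.sum_sub_distrib, Finset.sum_const, Finset.card_univ,
      Fintype.card_fin, nsmul_eq_mul]
    field_simp
    ring
  -- the linear map b ↦ (⟨c i, b⟩)_i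
  set L : (Fin p → ℝ) →ₗ[ℝ] (Fin n → ℝ) :=
    { toFun := fun b i => ∑ j, c i j * b j
      map_add' := by
        intro a b; funext i
        simp [mul_add, Finset.sum_add_distrib]
      map_smul' := by
        intro r b; funext i
        simp only [RingHom.id_apply, Pi.smul_apply, smul_eq_mul, Finset.mul_sum]
        apply Finset.sum_congr rfl
        intros; ring } with hL
  set F : (Fin n → ℝ) → ℝ := fun v => Finset.univ.sup' hne (fun i => Y i - v i) with hF
  have hFcont : Continuous F := by
    apply Continuous.finset_sup'_apply hne
    intro i _
    exact continuous_const.sub (continuous_apply i)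
  -- for v in the range of L, the coordinates sum to 0
  have hLsum : ∀ b, ∑ i, L b i = 0 := by
    intro b
    show ∑ i, ∑ j, c i j * b j = 0
    rw [Finset.sum_comm]
    simp [← Finset.sum_mul, hcsum]
  set mY : ℝ := Finset.univ.inf' hne Y with hmY
  -- coercivity bound on the zero-sum hyperplane
  have key : ∀ v : Fin n → ℝ, ∑ i, v i = 0 → mY + ‖v‖ / n ≤ F v := by
    intro v hv
    obtain ⟨i₀, -, hi₀⟩ := Finset.exists_mem_eq_inf' hne v
    set m : ℝ := Finset.univ.inf' hne v with hm
    have hle : ∀ i, m ≤ v i := fun i => Finset.inf'_le _ (Finset.mem_univ i)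
    have hm0 : m ≤ 0 := by
      by_contra h
      push_neg at h
      have : (0 : ℝ) < ∑ i, v i :=
        Finset.sum_pos (fun i _ => lt_of_lt_of_le h (hle i)) hne
      linarith [hv ▸ this]
    have hnorm : ‖v‖ ≤ -(n * m) := by
      rw [pi_norm_le_iff_of_nonneg]
      · intro i
        rw [Real.norm_eq_abs, abs_le]
        constructor
        · -- n*m ≤ v i since m ≤ 0, n ≥ 1
          have : (n : ℝ) * m ≤ 1 * m := by
            apply mul_le_mul_of_nonpos_right _ hm0
            exact_mod_cast hn
          nlinarith [hle i]
        · -- v i ≤ -(n*m): v i = -∑_{k≠i} v k ≤ -(n-1) m ≤ -n m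
          have hvi : v i = -∑ k ∈ Finset.univ.erase i, v k := by
            have := Finset.add_sum_erase Finset.univ v (Finset.mem_univ i)
            linarith [hv ▸ this]
          have hsum' : ((n : ℝ) - 1) * m ≤ ∑ k ∈ Finset.univ.erase i, v k := by
            have := Finset.card_nsmul_le_sum (Finset.univ.erase i) v m
              (fun k _ => hle k)
            have hcard : (Finset.univ.erase i).card = n - 1 := by
              simp [Finset.card_erase_of_mem]
            rw [hcard, nsmul_eq_mul] at this
            have : ((n - 1 : ℕ) : ℝ) * m ≤ ∑ k ∈ Finset.univ.erase i, v k := this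
            have hc1 : ((n - 1 : ℕ) : ℝ) = (n : ℝ) - 1 := by
              have : (1 : ℕ) ≤ n := hn
              push_cast [Nat.cast_sub this]
              ring
            rwa [hc1] at this
          nlinarith
      · nlinarith
    have h1 : ‖v‖ / n ≤ -m := by
      have hnpos : (0 : ℝ) < n := by exact_mod_cast hn
      rw [div_le_iff₀ hnpos]
      nlinarith
    have h2 : Y i₀ - v i₀ ≤ F v :=
      Finset.le_sup' (fun i => Y i - v i) (Finset.mem_univ i₀)
    have h3 : mY ≤ Y i₀ := Finset.inf'_le _ (Finset.mem_univ i₀)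
    have : v i₀ = m := hi₀.symm
    linarith
  have hnormnn : ∀ v : Fin n → ℝ, ∑ i, v i = 0 → mY ≤ F v := by
    intro v hv
    have := key v hv
    have : (0:ℝ) ≤ ‖v‖ / n := div_nonneg (norm_nonneg v) (by positivity)
    linarith [key v hv]
  -- bounded below
  have hbdd : BddBelow (Set.range fun b => F (L b)) := by
    refine ⟨mY, ?_⟩
    rintro r ⟨b, rfl⟩
    exact hnormnn _ (hLsum b)
  -- minimize F on the compact set K
  set K : Set (Fin n → ℝ) :=
    {v | v ∈ LinearMap.range L ∧ F v ≤ F 0} with hK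
  have hKne : (0 : Fin n → ℝ) ∈ K := ⟨⟨0, by simp⟩, le_refl _⟩
  have hKclosed : IsClosed K := by
    have h1 : IsClosed (LinearMap.range L : Set (Fin n → ℝ)) :=
      Submodule.closed_of_finiteDimensional _
    exact h1.inter (isClosed_Iic.preimage hFcont)
  have hKbdd : Bornology.IsBounded K := by
    apply Bornology.IsBounded.subset (Metric.isBounded_closedBall
      (x := (0 : Fin n → ℝ)) (r := n * (F 0 - mY)))
    rintro v ⟨⟨b, rfl⟩, hv⟩
    have hk := key (L b) (hLsum b)
    have hnpos : (0 : ℝ) < n := by exact_mod_cast hn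
    rw [Metric.mem_closedBall, dist_zero_right]
    have h := (div_le_iff₀ hnpos).mp (by linarith : ‖L b‖ / n ≤ F 0 - mY)
    rw [mul_comm]; exact h
  have hKcompact : IsCompact K := Metric.isCompact_of_isClosed_isBounded hKclosed hKbdd
  obtain ⟨v₀, hv₀K, hv₀min⟩ := hKcompact.exists_isMinOn ⟨0, hKne⟩ hFcont.continuousOn
  obtain ⟨⟨b₀, rfl⟩, hv₀le⟩ := hv₀K
  -- b₀ is a global minimizer
  have hglobal : ∀ b, F (L b₀) ≤ F (L b) := by
    intro b
    by_cases h : F (L b) ≤ F 0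
    · exact hv₀min ⟨⟨b, rfl⟩, h⟩
    · push_neg at h
      exact le_trans hv₀le h.le
  refine ⟨b₀, ?_⟩
  show F (L b₀) = ⨅ b, F (L b)
  apply le_antisymm
  · exact le_ciInf hglobal
  · exact ciInf_le hbdd b₀
end
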